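/- arXiv:2011.15072 — 2 statements merged into one kernel-verified Lean document; each statement's English description precedes it below -/
import Mathlib

section
/- Assume in addition that every k ∈ H with k·k^# = 1 can be written as k = h·(h^#)⁻¹ for some h ∈ H. Then every H-orbit in Q contains a fixed point of κ, and consequently the natural map Q_ℝ/H_ℝ → Q/H is a bijection, where Q_ℝ := {q ∈ Q | κ(q) = q}. -/
/-- The orbit space `Q/H` of a right action `act : Q → H → Q`. -/
def orbitQuot {Q H : Type*} (act : Q → H → Q) : Type _ :=
  Quot (fun q q' : Q => ∃ h : H, q' = act q h)

/-- The orbit space `Q_ℝ/H_ℝ`, where `Q_ℝ` is the fixed-point set of `κ` and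
`H_ℝ = {h | h^# = h}`. -/
def fixedOrbitQuot {Q H : Type*} (act : Q → H → Q) (sharp : H → H) (κ : Q → Q) : Type _ :=
  Quot (fun p p' : {q : Q // κ q = q} => ∃ h : H, sharp h = h ∧ p'.1 = act p.1 h)

/-- The natural map `Q_ℝ/H_ℝ → Q/H`. -/
def naturalMap {Q H : Type*} (act : Q → H → Q) (sharp : H → H) (κ : Q → Q) :
    fixedOrbitQuot act sharp κ → orbitQuot act :=
  Quot.lift (fun p => Quot.mk _ p.1)
    (fun _ _ hab => Quot.sound ⟨hab.choose, hab.choose_spec.2⟩)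

/-- Let `H` act freely on the right on `Q`, `#` an involutive automorphism of `H`, and
`κ : Q → Q` an involution with `κ(q·h) = κ(q)·h^#` preserving `H`-orbits.  If moreover every
`k ∈ H` with `k·k^# = 1` is of the form `k = h·(h^#)⁻¹`, then every `H`-orbit in `Q` contains
a fixed point of `κ`, and the natural map `Q_ℝ/H_ℝ → Q/H` is a bijection. -/
theorem statement3 {Q H : Type*} [Group H]
    (sharp : H →* H) (hsharp : ∀ h : H, sharp (sharp h) = h)
    (act : Q → H → Q)
    (hact_one : ∀ q : Q, act q 1 = q)
    (hact_mul : ∀ (q : Q) (h h' : H), act (act q h) h' = act q (h * h'))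
    (hfree : ∀ (q : Q) (h : H), act q h = q → h = 1)
    (κ : Q → Q)
    (hκ_inv : ∀ q : Q, κ (κ q) = q)
    (hκ_act : ∀ (q : Q) (h : H), κ (act q h) = act (κ q) (sharp h))
    (hκ_orbit : ∀ q : Q, ∃ h : H, κ q = act q h)
    (hsolve : ∀ k : H, k * sharp k = 1 → ∃ h : H, k = h * (sharp h)⁻¹) :
    (∀ q : Q, ∃ h : H, κ (act q h) = act q h) ∧
    Function.Bijective (naturalMap act (⇑sharp) κ) := by
  -- main fixed-point claim
  have fix : ∀ q : Q, ∃ h : H, κ (act q h) = act q h := by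
    intro q
    obtain ⟨k, hk⟩ := hκ_orbit q
    have hk1 : k * sharp k = 1 := by
      apply hfree q
      have : κ (κ q) = act q (k * sharp k) := by
        rw [hk, hκ_act, hk, hact_mul]
      rw [hκ_inv] at this
      exact this.symm
    obtain ⟨h, hh⟩ := hsolve k hk1
    refine ⟨h, ?_⟩
    rw [hκ_act, hk, hact_mul, hh]
    simp
  refine ⟨fix, ?_, ?_⟩
  · -- injectivity
    intro a b hab
    induction a using Quot.ind with | _ p => ?_
    induction b using Quot.ind with | _ p' => ?_
    have key : ∀ x y : Q, Relation.EqvGen (fun q q' : Q => ∃ h : H, q' = act q h) x y →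
        ∃ h : H, y = act x h := by
      intro x y hxy
      induction hxy with
      | rel x y hxy => exact hxy
      | refl x => exact ⟨1, (hact_one x).symm⟩
      | symm x y _ ih =>
          obtain ⟨h, rfl⟩ := ih
          exact ⟨h⁻¹, by rw [hact_mul]; simp [hact_one]⟩
      | trans x y z _ _ ih1 ih2 =>
          obtain ⟨h, rfl⟩ := ih1
          obtain ⟨g, rfl⟩ := ih2
          exact ⟨h * g, hact_mul x h g⟩
    obtain ⟨h, hh⟩ := key _ _ (Quot.eqvGen_exact hab)
    have hsh : sharp h = h := by
      have e1 : act p.1 h = act p.1 (sharp h) := by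
        have := congrArg κ hh
        rw [p'.2, hκ_act, p.2] at this
        rw [← hh, this]
      have : act (act p.1 h) (h⁻¹ * sharp h) = act p.1 h := by
        rw [hact_mul, mul_inv_cancel_left, ← e1]
      exact (inv_mul_eq_one.mp (hfree _ _ this)).symm
    exact Quot.sound ⟨h, hsh, hh⟩
  · -- surjectivity
    intro a
    induction a using Quot.ind with | _ q => ?_
    obtain ⟨h, hh⟩ := fix q
    refine ⟨Quot.mk _ ⟨act q h, hh⟩, ?_⟩
    exact (Quot.sound ⟨h, rfl⟩).symm
end

section
/- There is a well-defined map κ : Q → Q given by κ(q) := q·h·(h^#)⁻¹ for any h ∈ H with q·h ∈ P (the value is independent of the choice of such h), and this map satisfies κ ∘ κ = id, κ(q·h') = κ(q)·(h')^# for all q ∈ Q and h' ∈ H, and its fixed-point set {q ∈ Q | κ(q) = q} equals P. -/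
/-- Let `H` act freely on the right on `Q`, `#` an involutive automorphism of `H` with
fixed-point subgroup `H_ℝ`, and `P ⊆ Q` a subset stable under `H_ℝ`, meeting every `H`-orbit,
and such that any `h ∈ H` moving a point of `P` inside `P` lies in `H_ℝ`.  Then there is a
well-defined map `κ(q) := q·h·(h^#)⁻¹` (for any `h` with `q·h ∈ P`), which is an involution,
satisfies `κ(q·h') = κ(q)·(h')^#`, and whose fixed-point set is exactly `P`. -/
theorem statement4 {Q H : Type*} [Group H]
    (sharp : H →* H) (hsharp : ∀ h : H, sharp (sharp h) = h)
    (act : Q → H → Q)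
    (hact_one : ∀ q : Q, act q 1 = q)
    (hact_mul : ∀ (q : Q) (h h' : H), act (act q h) h' = act q (h * h'))
    (hfree : ∀ (q : Q) (h : H), act q h = q → h = 1)
    (P : Set Q)
    (hP_stable : ∀ p ∈ P, ∀ lam : H, sharp lam = lam → act p lam ∈ P)
    (hP_meets : ∀ q : Q, ∃ h : H, act q h ∈ P)
    (hP_real : ∀ p ∈ P, ∀ h : H, act p h ∈ P → sharp h = h) :
    ∃ κ : Q → Q,
      (∀ (q : Q) (h : H), act q h ∈ P → κ q = act (act q h) (sharp h)⁻¹) ∧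
      (∀ q : Q, κ (κ q) = q) ∧
      (∀ (q : Q) (h' : H), κ (act q h') = act (κ q) (sharp h')) ∧
      (∀ q : Q, κ q = q ↔ q ∈ P) := by
  classical
  set κ : Q → Q := fun q =>
    act q (Classical.choose (hP_meets q) * (sharp (Classical.choose (hP_meets q)))⁻¹) with hκ
  -- well-definedness
  have key : ∀ (q : Q) (h h' : H), act q h ∈ P → act q h' ∈ P →
      h * (sharp h)⁻¹ = h' * (sharp h')⁻¹ := by
    intro q h h' hp hp'
    have hmem : act (act q h) (h⁻¹ * h') ∈ P := by
      rw [hact_mul, mul_inv_cancel_left]; exact hp'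
    have hreal := hP_real _ hp _ hmem
    rw [map_mul, map_inv] at hreal
    have : sharp h' = sharp h * h⁻¹ * h' := by
      rw [mul_assoc, ← hreal, mul_inv_cancel_left]
    rw [this]; group
  have spec : ∀ (q : Q) (h : H), act q h ∈ P → κ q = act q (h * (sharp h)⁻¹) := by
    intro q h hp
    rw [hκ]
    simp only
    rw [key q _ h (Classical.choose_spec (hP_meets q)) hp]
  refine ⟨κ, ?_, ?_, ?_, ?_⟩
  · intro q h hp
    rw [spec q h hp, hact_mul]
  · intro q
    obtain ⟨h, hp⟩ := hP_meets q
    have h1 : κ q = act q (h * (sharp h)⁻¹) := spec q h hp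
    have h2 : act (κ q) (sharp h) ∈ P := by
      rw [h1, hact_mul, inv_mul_cancel_right]; exact hp
    rw [spec (κ q) (sharp h) h2, h1, hact_mul, hsharp]
    group
    exact hact_one q
  · intro q h'
    obtain ⟨h, hp⟩ := hP_meets q
    have hp' : act (act q h') (h'⁻¹ * h) ∈ P := by
      rw [hact_mul, mul_inv_cancel_left]; exact hp
    rw [spec _ _ hp', spec q h hp, hact_mul, hact_mul]
    congr 1
    rw [map_mul, map_inv]
    group
  · intro q
    constructor
    · intro hfix
      obtain ⟨h, hp⟩ := hP_meets q
      have := spec q h hp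
      rw [hfix] at this
      have h1 : h * (sharp h)⁻¹ = 1 := hfree q _ this.symm
      have h2 : sharp h = h := by
        rw [mul_inv_eq_one] at h1; exact h1.symm
      have : act (act q h) h⁻¹ ∈ P := by
        apply hP_stable _ hp
        rw [map_inv, h2]
      rwa [hact_mul, mul_inv_cancel, hact_one] at this
    · intro hq
      have : act q (1 : H) ∈ P := by rw [hact_one]; exact hq
      rw [spec q 1 this, map_one, inv_one, mul_one, hact_one]
end
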